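/- Let A and B be Banach algebras. If the ℓ¹-direct sum A ⊕ B (with coordinatewise operations and norm ‖(a,b)‖ = ‖a‖ + ‖b‖) is approximately cyclic amenable, then both A and B are approximately cyclic amenable. -/

import Mathlib

open Filter Topology

noncomputable section

universe u v

variable {A : Type u} [NonUnitalNormedRing A] [NormedSpace ℂ A]
  [IsScalarTower ℂ A A] [SMulCommClass ℂ A A]

/-- The left module action of `A` on its dual `A*`: `(a · f) b = f (b * a)`. -/
def lAct (a : A) (f : A →L[ℂ] ℂ) : A →L[ℂ] ℂ :=
  f.comp ((ContinuousLinearMap.mul ℂ A).flip a)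

/-- The right module action of `A` on its dual `A*`: `(f · a) b = f (a * b)`. -/
def rAct (f : A →L[ℂ] ℂ) (a : A) : A →L[ℂ] ℂ :=
  f.comp (ContinuousLinearMap.mul ℂ A a)

/-- A bounded linear `D : A → A*` is a derivation if `D (a * b) = D a · b + a · D b`. -/
def IsDerivation (D : A →L[ℂ] (A →L[ℂ] ℂ)) : Prop :=
  ∀ a b : A, D (a * b) = rAct (D a) b + lAct a (D b)

/-- A derivation `D : A → A*` is cyclic if `⟨D a, b⟩ + ⟨D b, a⟩ = 0` for all `a, b`. -/
def IsCyclicDeriv (D : A →L[ℂ] (A →L[ℂ] ℂ)) : Prop :=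
  ∀ a b : A, D a b + D b a = 0

/-- `D : A → A*` is approximately inner if there is a net `(f i)` in `A*` with
`D a = lim_i (a · f i - f i · a)` in norm, for every `a ∈ A`. -/
def IsApproxInner {A : Type u} [NonUnitalNormedRing A] [NormedSpace ℂ A]
    [IsScalarTower ℂ A A] [SMulCommClass ℂ A A] (D : A →L[ℂ] (A →L[ℂ] ℂ)) : Prop :=
  ∃ (ι : Type u) (l : Filter ι) (f : ι → (A →L[ℂ] ℂ)), l.NeBot ∧
    ∀ a : A, Tendsto (fun i => lAct a (f i) - rAct (f i) a) l (𝓝 (D a))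

/-- `D : A → A*` is inner if `D a = a · f - f · a` for some fixed `f ∈ A*`. -/
def IsInner (D : A →L[ℂ] (A →L[ℂ] ℂ)) : Prop :=
  ∃ f : A →L[ℂ] ℂ, ∀ a : A, D a = lAct a f - rAct f a

/-- A Banach algebra is approximately cyclic amenable if every cyclic bounded
derivation `D : A → A*` is approximately inner. -/
def ApproxCyclicAmenable (A : Type u) [NonUnitalNormedRing A] [NormedSpace ℂ A]
    [IsScalarTower ℂ A A] [SMulCommClass ℂ A A] : Prop :=
  ∀ D : A →L[ℂ] (A →L[ℂ] ℂ), IsDerivation D → IsCyclicDeriv D → IsApproxInner D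

/-- A Banach algebra is cyclic amenable if every cyclic bounded derivation
`D : A → A*` is inner. -/
def CyclicAmenable (A : Type u) [NonUnitalNormedRing A] [NormedSpace ℂ A]
    [IsScalarTower ℂ A A] [SMulCommClass ℂ A A] : Prop :=
  ∀ D : A →L[ℂ] (A →L[ℂ] ℂ), IsDerivation D → IsCyclicDeriv D → IsInner D

set_option linter.unusedSectionVars false

section L1Prod

variable {B : Type v} [NonUnitalNormedRing B] [NormedSpace ℂ B]
  [IsScalarTower ℂ B B] [SMulCommClass ℂ B B]

/-- Coordinatewise ring structure on the `ℓ¹`-direct sum `A ⊕ B`. -/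
instance : NonUnitalRing (WithLp 1 (A × B)) := (WithLp.equiv 1 (A × B)).nonUnitalRing

lemma l1prod_norm_def (x : WithLp 1 (A × B)) :
    ‖x‖ = ‖(WithLp.equiv 1 (A × B) x).1‖ + ‖(WithLp.equiv 1 (A × B) x).2‖ := by
  rw [WithLp.prod_norm_eq_add (by simp : 0 < (1 : ENNReal).toReal)]
  simp

/-- The `ℓ¹`-direct sum of two Banach algebras, with the coordinatewise product and the
norm `‖(a, b)‖ = ‖a‖ + ‖b‖`, is again a Banach algebra. -/
instance : NonUnitalNormedRing (WithLp 1 (A × B)) where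
  __ := (inferInstance : NonUnitalRing (WithLp 1 (A × B)))
  __ := (inferInstance : NormedAddCommGroup (WithLp 1 (A × B)))
  norm_mul_le x y := by
    rw [l1prod_norm_def, l1prod_norm_def x, l1prod_norm_def y]
    have hx1 : (WithLp.equiv 1 (A × B) (x * y)).1
        = (WithLp.equiv 1 (A × B) x).1 * (WithLp.equiv 1 (A × B) y).1 := rfl
    have hx2 : (WithLp.equiv 1 (A × B) (x * y)).2
        = (WithLp.equiv 1 (A × B) x).2 * (WithLp.equiv 1 (A × B) y).2 := rfl
    rw [hx1, hx2]
    set a1 := (WithLp.equiv 1 (A × B) x).1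
    set b1 := (WithLp.equiv 1 (A × B) x).2
    set a2 := (WithLp.equiv 1 (A × B) y).1
    set b2 := (WithLp.equiv 1 (A × B) y).2
    have h1 : ‖a1 * a2‖ ≤ ‖a1‖ * ‖a2‖ := norm_mul_le _ _
    have h2 : ‖b1 * b2‖ ≤ ‖b1‖ * ‖b2‖ := norm_mul_le _ _
    nlinarith [norm_nonneg a1, norm_nonneg a2, norm_nonneg b1, norm_nonneg b2]

instance : IsScalarTower ℂ (WithLp 1 (A × B)) (WithLp 1 (A × B)) :=
  ⟨fun c x y => (WithLp.equiv 1 (A × B)).injective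
    (smul_mul_assoc c (WithLp.equiv 1 (A × B) x) (WithLp.equiv 1 (A × B) y))⟩

instance : SMulCommClass ℂ (WithLp 1 (A × B)) (WithLp 1 (A × B)) :=
  ⟨fun c x y => (WithLp.equiv 1 (A × B)).injective
    (mul_smul_comm c (WithLp.equiv 1 (A × B) x) (WithLp.equiv 1 (A × B) y)).symm⟩

end L1Prod


section Aux

universe w

lemma approxCyclicAmenable_of_retract
    {P : Type w} [NonUnitalNormedRing P] [NormedSpace ℂ P]
    [IsScalarTower ℂ P P] [SMulCommClass ℂ P P]
    {C : Type u} [NonUnitalNormedRing C] [NormedSpace ℂ C]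
    [IsScalarTower ℂ C C] [SMulCommClass ℂ C C]
    (e : C →L[ℂ] P) (pr : P →L[ℂ] C)
    (he : ∀ a b : C, e (a * b) = e a * e b)
    (hpr : ∀ x y : P, pr (x * y) = pr x * pr y)
    (hpe : ∀ a : C, pr (e a) = a)
    (h : ApproxCyclicAmenable P) : ApproxCyclicAmenable C := by
  intro D hder hcyc
  let T : (C →L[ℂ] ℂ) →L[ℂ] (P →L[ℂ] ℂ) := (ContinuousLinearMap.compL ℂ P C ℂ).flip pr
  let S : (P →L[ℂ] ℂ) →L[ℂ] (C →L[ℂ] ℂ) := (ContinuousLinearMap.compL ℂ C P ℂ).flip e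
  let Dt : P →L[ℂ] (P →L[ℂ] ℂ) := T.comp (D.comp pr)
  have hDt : ∀ (x z : P), Dt x z = D (pr x) (pr z) := fun x z => rfl
  have hderD : ∀ a b c : C, D (a * b) c = D a (b * c) + D b (c * a) := by
    intro a b c
    have := congrArg (fun φ => φ c) (hder a b)
    simpa [rAct, lAct] using this
  have hder' : IsDerivation Dt := by
    intro x y
    ext z
    simp only [ContinuousLinearMap.add_apply]
    show Dt (x * y) z = Dt x (y * z) + Dt y (z * x)
    rw [hDt, hDt, hDt, hpr, hpr, hpr]
    exact hderD _ _ _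
  have hcyc' : IsCyclicDeriv Dt := fun x y => hcyc (pr x) (pr y)
  obtain ⟨ι, l, f, hne, hf⟩ := h Dt hder' hcyc'
  refine ⟨C →L[ℂ] ℂ, l.map (fun i => S (f i)), id, hne.map _, ?_⟩
  intro a
  rw [tendsto_map'_iff]
  have key : ∀ i, lAct a (S (f i)) - rAct (S (f i)) a
      = S (lAct (e a) (f i) - rAct (f i) (e a)) := by
    intro i
    ext c
    show f i (e (c * a)) - f i (e (a * c)) = f i (e c * e a) - f i (e a * e c)
    rw [he, he]
  have hDa : D a = S (Dt (e a)) := by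
    ext c
    show D a c = D (pr (e a)) (pr (e c))
    rw [hpe, hpe]
  have := (S.continuous.tendsto (Dt (e a))).comp (hf (e a))
  simp only [Function.comp_def] at this ⊢
  rw [hDa]
  exact this.congr fun i => (key i).symm

end Aux

/-- If the `ℓ¹`-direct sum `A ⊕ B` of two Banach algebras is approximately
cyclic amenable, then so are both `A` and `B`. -/
theorem approxCyclicAmenable_of_l1prod
    {A : Type u} [NonUnitalNormedRing A] [NormedSpace ℂ A]
    [IsScalarTower ℂ A A] [SMulCommClass ℂ A A] [CompleteSpace A]
    {B : Type v} [NonUnitalNormedRing B] [NormedSpace ℂ B]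
    [IsScalarTower ℂ B B] [SMulCommClass ℂ B B] [CompleteSpace B]
    (h : ApproxCyclicAmenable (WithLp 1 (A × B))) :
    ApproxCyclicAmenable A ∧ ApproxCyclicAmenable B := by
  constructor
  · refine approxCyclicAmenable_of_retract
      (((WithLp.prodContinuousLinearEquiv 1 ℂ A B).symm :
          (A × B) →L[ℂ] WithLp 1 (A × B)).comp (ContinuousLinearMap.inl ℂ A B))
      ((ContinuousLinearMap.fst ℂ A B).comp
        ((WithLp.prodContinuousLinearEquiv 1 ℂ A B) :
          WithLp 1 (A × B) →L[ℂ] (A × B)))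
      ?_ (fun x y => rfl) (fun a => rfl) h
    intro a b
    show ((WithLp.equiv 1 (A × B)).symm (a * b, 0) : WithLp 1 (A × B))
        = (WithLp.equiv 1 (A × B)).symm (a * b, (0 : B) * 0)
    rw [zero_mul]
  · refine approxCyclicAmenable_of_retract
      (((WithLp.prodContinuousLinearEquiv 1 ℂ A B).symm :
          (A × B) →L[ℂ] WithLp 1 (A × B)).comp (ContinuousLinearMap.inr ℂ A B))
      ((ContinuousLinearMap.snd ℂ A B).comp
        ((WithLp.prodContinuousLinearEquiv 1 ℂ A B) :
          WithLp 1 (A × B) →L[ℂ] (A × B)))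
      ?_ (fun x y => rfl) (fun a => rfl) h
    intro a b
    show ((WithLp.equiv 1 (A × B)).symm (0, a * b) : WithLp 1 (A × B))
        = (WithLp.equiv 1 (A × B)).symm ((0 : A) * 0, a * b)
    rw [zero_mul]
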